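/- The map Φ : C([0,∞), ℝ) × C↑([0,∞), ℝ) → C([0,∞), ℝ) defined by Φ(x,y)(t) = ∫₀ᵗ x(s) dy(s) (Stieltjes integral) is continuous, where C↑([0,∞)) denotes the set of increasing continuous functions and all spaces carry the topology of locally uniform convergence. -/

import Mathlib

open MeasureTheory Filter

/-- The Stieltjes measure `dy` associated with a monotone continuous function `y`. -/
noncomputable def stieltjesMeasureOf (y : ℝ → ℝ) (hm : Monotone y) (hc : Continuous y) :
    Measure ℝ :=
  StieltjesFunction.measure ⟨y, hm, fun _ => hc.continuousWithinAt⟩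

/-- The map `Φ(x, y)(t) = ∫₀ᵗ x(s) dy(s)`. -/
noncomputable def stieltjesIntegral (x y : ℝ → ℝ) (hm : Monotone y) (hc : Continuous y)
    (t : ℝ) : ℝ :=
  ∫ s in Set.Ioc (0 : ℝ) t, x s ∂(stieltjesMeasureOf y hm hc)

lemma stieltjesMeasureOf_Ioc (y : ℝ → ℝ) (hm : Monotone y) (hc : Continuous y) (a b : ℝ) :
    stieltjesMeasureOf y hm hc (Set.Ioc a b) = ENNReal.ofReal (y b - y a) :=
  StieltjesFunction.measure_Ioc _ a b

instance stieltjesMeasureOf.instLocFin (y : ℝ → ℝ) (hm : Monotone y) (hc : Continuous y) :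
    IsLocallyFiniteMeasure (stieltjesMeasureOf y hm hc) :=
  StieltjesFunction.instIsLocallyFiniteMeasure _

lemma integral_split (μ : Measure ℝ) [IsLocallyFiniteMeasure μ] {f : ℝ → ℝ} (hf : Continuous f)
    (c : ℕ → ℝ) (hc : Monotone c) (n : ℕ) :
    ∫ s in Set.Ioc (c 0) (c n), f s ∂μ
      = ∑ i ∈ Finset.range n, ∫ s in Set.Ioc (c i) (c (i + 1)), f s ∂μ := by
  induction n with
  | zero => simp
  | succ n ih =>
    rw [Finset.sum_range_succ, ← ih,
      ← MeasureTheory.setIntegral_union (Set.Ioc_disjoint_Ioc_of_le le_rfl) measurableSet_Ioc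
        hf.integrableOn_Ioc hf.integrableOn_Ioc,
      Set.Ioc_union_Ioc_eq_Ioc (hc (Nat.zero_le n)) (hc (Nat.le_succ n))]

lemma integral_close (y : ℝ → ℝ) (hm : Monotone y) (hc : Continuous y)
    {f : ℝ → ℝ} (hf : Continuous f) {a b : ℝ} (hab : a ≤ b) {x0 d : ℝ}
    (hd : ∀ u ∈ Set.Ioc a b, |f u - x0| ≤ d) :
    |(∫ s in Set.Ioc a b, f s ∂(stieltjesMeasureOf y hm hc)) - x0 * (y b - y a)|
      ≤ d * (y b - y a) := by
  set μ := stieltjesMeasureOf y hm hc with hμdef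
  have hμ : μ (Set.Ioc a b) < ⊤ := by
    rw [hμdef, stieltjesMeasureOf_Ioc]; exact ENNReal.ofReal_lt_top
  have hto : (μ (Set.Ioc a b)).toReal = y b - y a := by
    rw [hμdef, stieltjesMeasureOf_Ioc, ENNReal.toReal_ofReal (sub_nonneg.2 (hm hab))]
  have heq : ∫ s in Set.Ioc a b, (f s - x0) ∂μ
      = (∫ s in Set.Ioc a b, f s ∂μ) - (y b - y a) * x0 := by
    rw [integral_sub hf.integrableOn_Ioc (integrableOn_const hμ.ne),
      setIntegral_const, measureReal_def, hto, smul_eq_mul]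
  have h1 : (∫ s in Set.Ioc a b, f s ∂μ) - x0 * (y b - y a)
      = ∫ s in Set.Ioc a b, (f s - x0) ∂μ := by rw [heq]; ring
  rw [h1, ← Real.norm_eq_abs]
  calc ‖∫ s in Set.Ioc a b, (f s - x0) ∂μ‖
      ≤ d * (μ (Set.Ioc a b)).toReal :=
        norm_setIntegral_le_of_norm_le_const hμ
          (fun u hu => by rw [Real.norm_eq_abs]; exact hd u hu)
    _ = d * (y b - y a) := by rw [hto]

set_option maxHeartbeats 1600000 in
theorem stieltjes_integration_map_continuous
    (x : ℝ → ℝ) (hx : Continuous x)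
    (y : ℝ → ℝ) (hym : Monotone y) (hyc : Continuous y)
    (xN : ℕ → ℝ → ℝ) (hxN : ∀ N, Continuous (xN N))
    (yN : ℕ → ℝ → ℝ) (hyNm : ∀ N, Monotone (yN N)) (hyNc : ∀ N, Continuous (yN N))
    (hxconv : TendstoLocallyUniformly xN x atTop)
    (hyconv : TendstoLocallyUniformly yN y atTop) :
    TendstoLocallyUniformlyOn
      (fun N t => stieltjesIntegral (xN N) (yN N) (hyNm N) (hyNc N) t)
      (fun t => stieltjesIntegral x y hym hyc t) atTop (Set.Ici 0) := by
  have main : ∀ T : ℝ, 0 ≤ T →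
      TendstoUniformlyOn
        (fun N t => stieltjesIntegral (xN N) (yN N) (hyNm N) (hyNc N) t)
        (fun t => stieltjesIntegral x y hym hyc t) atTop (Set.Icc (-T) T) := by
    intro T hT
    rw [Metric.tendstoUniformlyOn_iff]
    intro ε hε
    obtain ⟨C, hC⟩ := (isCompact_Icc (a := (0:ℝ)) (b := T)).exists_bound_of_continuousOn
      hx.continuousOn
    have hC0 : 0 ≤ C := le_trans (norm_nonneg _) (hC 0 ⟨le_rfl, hT⟩)
    set My := y T - y 0 with hMydef
    have hMy0 : 0 ≤ My := sub_nonneg.2 (hym hT)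
    set δ := ε / (8 * (My + 2)) with hδdef
    have hδ : 0 < δ := by
      apply div_pos hε; nlinarith
    have hux := (isCompact_Icc (a := (0:ℝ)) (b := T)).uniformContinuousOn_of_continuous
      hx.continuousOn
    rw [Metric.uniformContinuousOn_iff] at hux
    obtain ⟨r, hr, hxr⟩ := hux δ hδ
    obtain ⟨n, hn⟩ := exists_nat_gt (T / r)
    have hn0 : (0:ℝ) < n := lt_of_le_of_lt (div_nonneg hT hr.le) hn
    set h := T / n with hhdef
    have hh0 : 0 ≤ h := div_nonneg hT hn0.le
    have hTnr : T < n * r := by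
      have := (div_lt_iff₀ hr).1 hn; linarith
    have hhr : h < r := (div_lt_iff₀ hn0).2 (by linarith)
    set η := min 1 (ε / (8 * (n + 1) * (C + 1))) with hηdef
    have hη : 0 < η := lt_min one_pos (by positivity)
    have hη1 : η ≤ 1 := min_le_left _ _
    have hη2 : η * (8 * (n + 1) * (C + 1)) ≤ ε := by
      have h2 : η ≤ ε / (8 * (n + 1) * (C + 1)) := min_le_right _ _
      have hpos : (0:ℝ) < 8 * (n + 1) * (C + 1) := by positivity
      rw [← le_div_iff₀ hpos]; exact h2
    have hxU := (tendstoLocallyUniformly_iff_forall_isCompact.1 hxconv) _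
      (isCompact_Icc (a := (0:ℝ)) (b := T))
    have hyU := (tendstoLocallyUniformly_iff_forall_isCompact.1 hyconv) _
      (isCompact_Icc (a := (0:ℝ)) (b := T))
    rw [Metric.tendstoUniformlyOn_iff] at hxU hyU
    filter_upwards [hxU δ hδ, hyU η hη] with N hxd hyd
    intro t ht
    rw [Real.dist_eq]
    by_cases ht0 : t ≤ 0
    · have he : Set.Ioc (0:ℝ) t = ∅ := Set.Ioc_eq_empty (not_lt.2 ht0)
      simp only [stieltjesIntegral, he, Measure.restrict_empty, integral_zero_measure,
        sub_zero, abs_zero]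
      exact hε
    push_neg at ht0
    have htT : t ≤ T := ht.2
    set c : ℕ → ℝ := fun i => min (i * h) t with hcdef
    have hcm : Monotone c := fun i j hij =>
      min_le_min (mul_le_mul_of_nonneg_right (by exact_mod_cast hij) hh0) le_rfl
    have hc0 : c 0 = 0 := by
      simp only [hcdef, Nat.cast_zero, zero_mul]
      exact min_eq_left ht0.le
    have hcn : c n = t := by
      have hnh : (n:ℝ) * h = T := by
        rw [hhdef]; field_simp
      simp only [hcdef, hnh]
      exact min_eq_right htT
    have hcmem : ∀ i, c i ∈ Set.Icc (0:ℝ) T := by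
      intro i
      constructor
      · exact le_min (by positivity) ht0.le
      · exact le_trans (min_le_right _ _) htT
    set μ := stieltjesMeasureOf y hym hyc with hμdef
    set μN := stieltjesMeasureOf (yN N) (hyNm N) (hyNc N) with hμNdef
    have hsplit : stieltjesIntegral x y hym hyc t
        = ∑ i ∈ Finset.range n, ∫ s in Set.Ioc (c i) (c (i + 1)), x s ∂μ := by
      rw [stieltjesIntegral, ← hμdef, ← hc0, ← hcn, integral_split μ hx c hcm n]
    have hsplitN : stieltjesIntegral (xN N) (yN N) (hyNm N) (hyNc N) t
        = ∑ i ∈ Finset.range n, ∫ s in Set.Ioc (c i) (c (i + 1)), xN N s ∂μN := by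
      rw [stieltjesIntegral, ← hμNdef, ← hc0, ← hcn, integral_split μN (hxN N) c hcm n]
    simp only [hsplit, hsplitN, ← Finset.sum_sub_distrib]
    have key : ∀ i ∈ Finset.range n,
        |(∫ s in Set.Ioc (c i) (c (i + 1)), x s ∂μ)
          - (∫ s in Set.Ioc (c i) (c (i + 1)), xN N s ∂μN)|
          ≤ δ * (y (c (i + 1)) - y (c i)) + 2 * C * η
            + 2 * δ * (yN N (c (i + 1)) - yN N (c i)) := by
      intro i hi
      have hiln : i < n := Finset.mem_range.1 hi
      set a := c i with hadef
      set b := c (i + 1) with hbdef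
      have hab : a ≤ b := hcm (Nat.le_succ i)
      set s0 : ℝ := i * h with hs0def
      have hs0mem : s0 ∈ Set.Icc (0:ℝ) T := by
        constructor
        · positivity
        · rw [hs0def]
          calc (i:ℝ) * h ≤ n * h :=
                mul_le_mul_of_nonneg_right (by exact_mod_cast hiln.le) hh0
            _ = T := by rw [hhdef]; field_simp
      have hsub : ∀ u ∈ Set.Ioc a b, u ∈ Set.Icc (0:ℝ) T ∧ dist u s0 < r := by
        intro u hu
        rcases le_or_gt ((i:ℝ) * h) t with hst | hst
        · have ha : a = (i:ℝ) * h := min_eq_left hst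
          have h1 : (i:ℝ) * h < u := by rw [← ha]; exact hu.1
          have h2 : u ≤ min (((i:ℕ) + 1 : ℝ) * h) t := by
            have := hu.2
            rw [hbdef, hcdef] at this
            simpa using this
          have h3 : u ≤ ((i:ℝ) + 1) * h := le_trans h2 (by push_cast; exact min_le_left _ _)
          have h4 : u ≤ t := le_trans h2 (min_le_right _ _)
          refine ⟨⟨?_, le_trans h4 htT⟩, ?_⟩
          · have : (0:ℝ) ≤ (i:ℝ) * h := by positivity
            linarith
          · rw [Real.dist_eq, abs_of_pos (by linarith)]
            have : ((i:ℝ) + 1) * h - (i:ℝ) * h = h := by ring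
            linarith [hhr]
        · exfalso
          have ha : a = t := min_eq_right hst.le
          have hb : b = t := by
            rw [hbdef, hcdef]
            refine min_eq_right ?_
            push_cast
            nlinarith
          rw [ha] at hu
          have := hu.1
          have := hu.2
          rw [hb] at this
          linarith
      have hboundN : ∀ u ∈ Set.Ioc a b, |xN N u - x s0| ≤ 2 * δ := by
        intro u hu
        obtain ⟨humem, hudist⟩ := hsub u hu
        have h1 : |x u - xN N u| < δ := by
          have := hxd u humem; rwa [Real.dist_eq] at this
        have h2 : |x u - x s0| < δ := by
          have := hxr u humem s0 hs0mem hudist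
          rwa [Real.dist_eq] at this
        have := abs_sub_abs_le_abs_sub (xN N u - x s0) 0
        calc |xN N u - x s0| = |(x u - x s0) - (x u - xN N u)| := by ring_nf
          _ ≤ |x u - x s0| + |x u - xN N u| := abs_sub _ _
          _ ≤ 2 * δ := by linarith
      have hbound : ∀ u ∈ Set.Ioc a b, |x u - x s0| ≤ δ := by
        intro u hu
        obtain ⟨humem, hudist⟩ := hsub u hu
        have := hxr u humem s0 hs0mem hudist
        rw [Real.dist_eq] at this; linarith
      have t1 := integral_close y hym hyc hx hab hbound
      have t2 := integral_close (yN N) (hyNm N) (hyNc N) (hxN N) hab hboundN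
      have hx0 : |x s0| ≤ C := by
        have := hC s0 hs0mem; rwa [Real.norm_eq_abs] at this
      have hya : |yN N a - y a| < η := by
        have := hyd a (hcmem i); rw [Real.dist_eq] at this
        rw [abs_sub_comm] at this; exact this
      have hyb : |yN N b - y b| < η := by
        have := hyd b (hcmem (i + 1)); rw [Real.dist_eq] at this
        rw [abs_sub_comm] at this; exact this
      have t3 : |(y b - y a) - (yN N b - yN N a)| ≤ 2 * η := by
        have h1 := abs_sub_abs_le_abs_sub (yN N b - y b) 0
        calc |(y b - y a) - (yN N b - yN N a)|
            = |(yN N a - y a) - (yN N b - y b)| := by ring_nf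
          _ ≤ |yN N a - y a| + |yN N b - y b| := abs_sub _ _
          _ ≤ 2 * η := by linarith
      set A := ∫ s in Set.Ioc a b, xN N s ∂μN with hAdef
      set B := ∫ s in Set.Ioc a b, x s ∂μ with hBdef
      have hsplit2 : B - A = (B - x s0 * (y b - y a))
          + x s0 * ((y b - y a) - (yN N b - yN N a))
          + (x s0 * (yN N b - yN N a) - A) := by ring
      rw [hsplit2]
      calc |(B - x s0 * (y b - y a)) + x s0 * ((y b - y a) - (yN N b - yN N a))
            + (x s0 * (yN N b - yN N a) - A)|
          ≤ |(B - x s0 * (y b - y a)) + x s0 * ((y b - y a) - (yN N b - yN N a))|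
            + |x s0 * (yN N b - yN N a) - A| := abs_add_le _ _
        _ ≤ |B - x s0 * (y b - y a)| + |x s0 * ((y b - y a) - (yN N b - yN N a))|
            + |x s0 * (yN N b - yN N a) - A| := by
              linarith [abs_add_le (B - x s0 * (y b - y a))
                (x s0 * ((y b - y a) - (yN N b - yN N a)))]
        _ ≤ δ * (y b - y a) + 2 * C * η + 2 * δ * (yN N b - yN N a) := by
            have e1 : |x s0 * ((y b - y a) - (yN N b - yN N a))| ≤ C * (2 * η) := by
              rw [abs_mul]
              exact mul_le_mul hx0 t3 (abs_nonneg _) hC0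
            have e2 : |x s0 * (yN N b - yN N a) - A| = |A - x s0 * (yN N b - yN N a)| :=
              abs_sub_comm _ _
            rw [e2]
            have e3 : (2:ℝ) * δ * (yN N b - yN N a) = 2 * δ * (yN N b - yN N a) := rfl
            linarith [t1, t2]
    calc |∑ i ∈ Finset.range n,
          ((∫ s in Set.Ioc (c i) (c (i + 1)), x s ∂μ)
            - ∫ s in Set.Ioc (c i) (c (i + 1)), xN N s ∂μN)|
        ≤ ∑ i ∈ Finset.range n,
          |(∫ s in Set.Ioc (c i) (c (i + 1)), x s ∂μ)
            - ∫ s in Set.Ioc (c i) (c (i + 1)), xN N s ∂μN| :=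
          Finset.abs_sum_le_sum_abs _ _
      _ ≤ ∑ i ∈ Finset.range n,
          (δ * (y (c (i + 1)) - y (c i)) + 2 * C * η
            + 2 * δ * (yN N (c (i + 1)) - yN N (c i))) := Finset.sum_le_sum key
      _ = δ * (y t - y 0) + n * (2 * C * η) + 2 * δ * (yN N t - yN N 0) := by
          have e1 : ∑ i ∈ Finset.range n, (y (c (i + 1)) - y (c i)) = y t - y 0 := by
            rw [Finset.sum_range_sub (fun i => y (c i)), hc0, hcn]
          have e2 : ∑ i ∈ Finset.range n, (yN N (c (i + 1)) - yN N (c i))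
              = yN N t - yN N 0 := by
            rw [Finset.sum_range_sub (fun i => yN N (c i)), hc0, hcn]
          rw [Finset.sum_add_distrib, Finset.sum_add_distrib]
          congr 1
          · congr 1
            · rw [← Finset.mul_sum, e1]
            · rw [Finset.sum_const, Finset.card_range, nsmul_eq_mul]
          · rw [← Finset.mul_sum, e2]
      _ < ε := by
          have b1 : y t - y 0 ≤ My := by
            rw [hMydef]; have := hym htT; linarith
          have b2 : yN N t - yN N 0 ≤ My + 2 := by
            have h1 : |y t - yN N t| < η := by
              have := hyd t ⟨ht0.le, htT⟩; rwa [Real.dist_eq] at this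
            have h2 : |y 0 - yN N 0| < η := by
              have := hyd 0 ⟨le_rfl, hT⟩; rwa [Real.dist_eq] at this
            have h1' := abs_lt.1 h1
            have h2' := abs_lt.1 h2
            have : y t - y 0 ≤ My := b1
            rw [hMydef]
            linarith
          have hδMy : δ * (My + 2) = ε / 8 := by
            rw [hδdef]; field_simp
          have hyNnn : 0 ≤ yN N t - yN N 0 := sub_nonneg.2 (hyNm N ht0.le)
          have hynn : 0 ≤ y t - y 0 := sub_nonneg.2 (hym ht0.le)
          have hnle : (n:ℝ) * (2 * C * η) ≤ ε / 4 := by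
            have h1 : (n:ℝ) * (2 * C * η) ≤ 2 * (n + 1) * (C + 1) * η := by
              nlinarith [hη.le, hC0, hn0.le]
            have h2 : 2 * ((n:ℝ) + 1) * (C + 1) * η ≤ ε / 4 := by nlinarith [hη2]
            linarith
          have d1 : δ * (y t - y 0) ≤ ε / 8 := by
            calc δ * (y t - y 0) ≤ δ * (My + 2) :=
                  mul_le_mul_of_nonneg_left (by linarith) hδ.le
              _ = ε / 8 := hδMy
          have d2 : 2 * δ * (yN N t - yN N 0) ≤ 2 * (ε / 8) := by
            have : δ * (yN N t - yN N 0) ≤ δ * (My + 2) :=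
              mul_le_mul_of_nonneg_left b2 hδ.le
            nlinarith [hδMy, this]
          linarith
  have loc : TendstoLocallyUniformly
      (fun N t => stieltjesIntegral (xN N) (yN N) (hyNm N) (hyNc N) t)
      (fun t => stieltjesIntegral x y hym hyc t) atTop := by
    rw [tendstoLocallyUniformly_iff_forall_isCompact]
    intro K hK
    obtain ⟨a, b, hab⟩ := bddBelow_bddAbove_iff_subset_Icc.1 ⟨hK.bddBelow, hK.bddAbove⟩
    refine (main (max 0 (max (-a) b)) (le_max_left _ _)).mono
      (hab.trans (Set.Icc_subset_Icc ?_ ?_))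
    · have h1 : -a ≤ max (-a) b := le_max_left _ _
      have h2 : max (-a) b ≤ max 0 (max (-a) b) := le_max_right _ _
      linarith
    · exact le_trans (le_max_right (-a) b) (le_max_right _ _)
  exact loc.tendstoLocallyUniformlyOn
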